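/- Let D > 0, L > 0, k > 0. Consider the eigenvalue problem on (0, L/2) ∪ (L/2, L): −D z'' = η z on each subinterval, z'(0) = z'(L) = 0, and at x_m = L/2 the membrane conditions D z_l'(x_m) = D z_r'(x_m) = k(z_r(x_m) − z_l(x_m)). Then for η > 0, the pair z_l(x) = −cos(√(η/D)·x), z_r(x) = cos(√(η/D)·(x−L)) is a nontrivial solution if and only if √η · tan(√η/√D · L/2) = 2k/√D. -/

import Mathlib

/-- 1D membrane eigenvalue problem with ν_D = 1: for η > 0, the candidate pair
z_l(x) = −cos(√(η/D)·x), z_r(x) = cos(√(η/D)·(x−L)) satisfies the equations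
−D z'' = η z, the Neumann conditions z_l'(0) = z_r'(L) = 0 and the
Kedem–Katchalsky conditions D z_l'(L/2) = D z_r'(L/2) = k(z_r(L/2) − z_l(L/2))
if and only if √η · tan((√η/√D)·(L/2)) = 2k/√D. -/
theorem stmt14 (D L k η : ℝ) (hD : 0 < D) (hL : 0 < L) (hk : 0 < k) (hη : 0 < η)
    (zl zr : ℝ → ℝ)
    (hzl : ∀ x, zl x = -Real.cos (Real.sqrt (η / D) * x))
    (hzr : ∀ x, zr x = Real.cos (Real.sqrt (η / D) * (x - L))) :
    ((∀ x : ℝ, -D * deriv (deriv zl) x = η * zl x) ∧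
     (∀ x : ℝ, -D * deriv (deriv zr) x = η * zr x) ∧
     deriv zl 0 = 0 ∧ deriv zr L = 0 ∧
     D * deriv zl (L / 2) = D * deriv zr (L / 2) ∧
     D * deriv zl (L / 2) = k * (zr (L / 2) - zl (L / 2)))
    ↔ Real.sqrt η * Real.tan (Real.sqrt η / Real.sqrt D * (L / 2)) =
        2 * k / Real.sqrt D := by
  set ω := Real.sqrt (η / D) with hωdef
  have hzL : zl = fun x => -Real.cos (ω * x) := funext hzl
  have hzR : zr = fun x => Real.cos (ω * (x - L)) := funext hzr
  have hω2 : D * ω ^ 2 = η := by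
    rw [hωdef, Real.sq_sqrt (by positivity)]
    field_simp
  have hlin : ∀ x : ℝ, HasDerivAt (fun x : ℝ => ω * x) ω x := fun x => by
    simpa using (hasDerivAt_id x).const_mul ω
  have hlin2 : ∀ x : ℝ, HasDerivAt (fun x : ℝ => ω * (x - L)) ω x := fun x => by
    simpa using ((hasDerivAt_id x).sub_const L).const_mul ω
  have dl : ∀ x, HasDerivAt zl (ω * Real.sin (ω * x)) x := by
    intro x
    rw [hzL]
    simpa [mul_comm, Pi.neg_def] using ((hlin x).cos).neg
  have dr : ∀ x, HasDerivAt zr (-(ω * Real.sin (ω * (x - L)))) x := by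
    intro x
    rw [hzR]
    simpa [mul_comm] using (hlin2 x).cos
  have dl' : deriv zl = fun x => ω * Real.sin (ω * x) := funext fun x => (dl x).deriv
  have dr' : deriv zr = fun x => -(ω * Real.sin (ω * (x - L))) := funext fun x => (dr x).deriv
  have ddl : ∀ x, deriv (deriv zl) x = ω ^ 2 * Real.cos (ω * x) := by
    intro x
    rw [dl']
    have : HasDerivAt (fun x => ω * Real.sin (ω * x)) (ω * (Real.cos (ω * x) * ω)) x :=
      ((hlin x).sin).const_mul ω
    rw [this.deriv]; ring
  have ddr : ∀ x, deriv (deriv zr) x = -(ω ^ 2 * Real.cos (ω * (x - L))) := by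
    intro x
    rw [dr']
    have : HasDerivAt (fun x => -(ω * Real.sin (ω * (x - L))))
        (-(ω * (Real.cos (ω * (x - L)) * ω))) x := (((hlin2 x).sin).const_mul ω).neg
    rw [this.deriv]; ring
  -- the trig values at L/2
  have hhalf : ω * (L / 2 - L) = -(ω * (L / 2)) := by ring
  set θ := ω * (L / 2) with hθ
  have hωeq : ω = Real.sqrt η / Real.sqrt D := Real.sqrt_div' η hD.le ▸ by
    rw [hωdef, Real.sqrt_div hη.le]
  have hb : Real.sqrt D > 0 := Real.sqrt_pos.mpr hD
  have ha : Real.sqrt η > 0 := Real.sqrt_pos.mpr hη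
  have hbb : Real.sqrt D * Real.sqrt D = D := Real.mul_self_sqrt hD.le
  have key : (D * (ω * Real.sin θ) = k * (Real.cos (-θ) - -Real.cos θ)) ↔
      Real.sqrt η * Real.tan (Real.sqrt η / Real.sqrt D * (L / 2)) =
        2 * k / Real.sqrt D := by
    have hθeq : Real.sqrt η / Real.sqrt D * (L / 2) = θ := by rw [hθ, hωeq]
    rw [hθeq, Real.cos_neg, Real.tan_eq_sin_div_cos]
    constructor
    · intro h
      have hcos : Real.cos θ ≠ 0 := by
        intro hc
        have hs : Real.sin θ ≠ 0 := by
          intro hs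
          have := Real.sin_sq_add_cos_sq θ
          rw [hs, hc] at this; norm_num at this
        have : D * (ω * Real.sin θ) ≠ 0 := by
          have hω0 : ω > 0 := by rw [hωeq]; positivity
          exact mul_ne_zero hD.ne' (mul_ne_zero hω0.ne' hs)
        exact this (by rw [h, hc]; ring)
      rw [hωeq] at h
      field_simp at h ⊢
      have h2 : Real.sqrt D * (Real.sqrt η * Real.sin θ * Real.sqrt D) =
          Real.sqrt D * (2 * k * Real.cos θ) := by
        linear_combination h + (Real.sqrt η * Real.sin θ) * hbb
      exact mul_left_cancel₀ hb.ne' (by linear_combination h2)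
    · intro h
      have hcos : Real.cos θ ≠ 0 := by
        intro hc
        rw [hc] at h
        simp at h
        have : (0:ℝ) < 2 * k / Real.sqrt D := by positivity
        rw [← h] at this
        norm_num at this
      rw [hωeq]
      field_simp at h ⊢
      linear_combination Real.sqrt D * h - Real.sqrt η * Real.sin θ * hbb
  constructor
  · rintro ⟨-, -, -, -, -, h6⟩
    rw [dl', hzL, hzR] at h6
    simp only at h6
    rw [hhalf] at h6
    exact key.mp h6
  · intro h
    refine ⟨?_, ?_, ?_, ?_, ?_, ?_⟩
    · intro x
      rw [ddl x, hzL]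
      simp only
      linear_combination (-Real.cos (ω * x)) * hω2
    · intro x
      rw [ddr x, hzR]
      simp only
      linear_combination Real.cos (ω * (x - L)) * hω2
    · rw [dl']; simp
    · rw [dr']; simp
    · rw [dl', dr']
      simp only
      rw [hhalf, Real.sin_neg]
      ring
    · rw [dl', hzL, hzR]
      simp only
      rw [hhalf]
      exact key.mpr h
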